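/- The only monomial ideals in K[x_1,...,x_n] which are both 𝔖_n-fixed and strongly stable are the powers (x_1,...,x_n)^d of the homogeneous maximal ideal. -/
import Mathlib


open MvPolynomial

/-- The monomial `x^a` in `K[x_1,...,x_n]`. -/
noncomputable def mon (K : Type) [Field K] (n : ℕ) (a : Fin n → ℕ) :
    MvPolynomial (Fin n) K :=
  monomial (Finsupp.equivFunOnFinite.symm a) 1

/-- A monomial ideal: an ideal generated by monomials. -/
def IsMonomialIdeal (K : Type) [Field K] (n : ℕ)
    (I : Ideal (MvPolynomial (Fin n) K)) : Prop :=
  ∃ S : Set (Fin n → ℕ), I = Ideal.span (mon K n '' S)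

/-- A symmetric (`𝔖_n`-fixed) ideal. -/
def IsSymmetricIdeal (K : Type) [Field K] (n : ℕ)
    (I : Ideal (MvPolynomial (Fin n) K)) : Prop :=
  ∀ σ : Equiv.Perm (Fin n), Ideal.map (rename (σ : Fin n → Fin n)) I = I

/-- The exponent vector obtained from `a` by the Borel move `x^a ↦ x^a · x_i / x_j`. -/
def borelMoveVec (n : ℕ) (a : Fin n → ℕ) (i j : Fin n) : Fin n → ℕ :=
  fun k => if k = i then a k + 1 else if k = j then a k - 1 else a k

/-- A symmetric strongly shifted ideal (sssi). -/
def IsSSSI (K : Type) [Field K] (n : ℕ)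
    (I : Ideal (MvPolynomial (Fin n) K)) : Prop :=
  IsMonomialIdeal K n I ∧ IsSymmetricIdeal K n I ∧
    ∀ lam : Fin n → ℕ, Monotone lam → mon K n lam ∈ I →
      ∀ i j : Fin n, i < j → lam i < lam j →
        mon K n (borelMoveVec n lam i j) ∈ I

/-- The dominance order on partitions: `μ ⊴ λ`. -/
def dominates (n : ℕ) (μ lam : Fin n → ℕ) : Prop :=
  ∀ k : Fin n, ∑ i ∈ Finset.Ici k, μ i ≤ ∑ i ∈ Finset.Ici k, lam i

/-- A strongly stable monomial ideal: a monomial ideal closed under the Borel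
moves `x^a ↦ x^a · x_i / x_j` for `i < j` with `a_j ≠ 0`. -/
def IsStronglyStable (K : Type) [Field K] (n : ℕ)
    (I : Ideal (MvPolynomial (Fin n) K)) : Prop :=
  IsMonomialIdeal K n I ∧
    ∀ a : Fin n → ℕ, mon K n a ∈ I → ∀ i j : Fin n, i < j → a j ≠ 0 →
      mon K n (borelMoveVec n a i j) ∈ I

section Aux

open Finset

variable {K : Type} [Field K] {n : ℕ}

lemma symm_apply (a : Fin n → ℕ) (k : Fin n) : Finsupp.equivFunOnFinite.symm a k = a k := rfl

lemma symm_add (a b : Fin n → ℕ) :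
    Finsupp.equivFunOnFinite.symm (a + b)
      = Finsupp.equivFunOnFinite.symm a + Finsupp.equivFunOnFinite.symm b := by
  ext k; simp [symm_apply]

lemma mon_mul (a b : Fin n → ℕ) : mon K n a * mon K n b = mon K n (a + b) := by
  unfold mon
  rw [MvPolynomial.monomial_mul, one_mul, symm_add]

lemma support_mon (a : Fin n → ℕ) :
    (mon K n a).support = {Finsupp.equivFunOnFinite.symm a} := by
  classical
  unfold mon
  rw [MvPolynomial.support_monomial, if_neg one_ne_zero]

lemma mon_mem_span_iff {S : Set (Fin n → ℕ)} {b : Fin n → ℕ} :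
    mon K n b ∈ Ideal.span (mon K n '' S) ↔ ∃ a ∈ S, ∀ i, a i ≤ b i := by
  have himg : mon K n '' S
      = (fun s => MvPolynomial.monomial s (1 : K)) '' (Finsupp.equivFunOnFinite.symm '' S) := by
    rw [← Set.image_comp]; rfl
  rw [himg, MvPolynomial.mem_ideal_span_monomial_image]
  constructor
  · intro h
    obtain ⟨si, hsi, hle⟩ := h (Finsupp.equivFunOnFinite.symm b)
      (by rw [support_mon]; exact Finset.mem_singleton_self _)
    obtain ⟨a, haS, rfl⟩ := hsi
    exact ⟨a, haS, fun i => hle i⟩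
  · rintro ⟨a, haS, hle⟩ xi hxi
    rw [support_mon, Finset.mem_singleton] at hxi
    subst hxi
    exact ⟨_, ⟨a, haS, rfl⟩, fun i => hle i⟩

lemma truncate {d : ℕ} {b : Fin n → ℕ} (h : d ≤ ∑ i, b i) :
    ∃ a : Fin n → ℕ, (∀ i, a i ≤ b i) ∧ ∑ i, a i = d := by
  induction d with
  | zero => exact ⟨0, fun i => Nat.zero_le _, by simp⟩
  | succ d ih =>
    obtain ⟨a, hle, hsum⟩ := ih (Nat.le_of_succ_le h)
    have hex : ∃ i, a i < b i := by
      by_contra hc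
      push_neg at hc
      have : ∑ i, b i ≤ ∑ i, a i := Finset.sum_le_sum fun i _ => hc i
      omega
    obtain ⟨i, hi⟩ := hex
    refine ⟨Function.update a i (a i + 1), fun k => ?_, ?_⟩
    · rcases eq_or_ne k i with rfl | hk
      · rw [Function.update_self]; omega
      · rw [Function.update_of_ne hk]; exact hle k
    · rw [Finset.sum_update_of_mem (Finset.mem_univ i), ← Finset.erase_eq]
      rw [← Finset.add_sum_erase _ a (Finset.mem_univ i)] at hsum
      omega

/-- The ideal generated by all monomials of total degree `d`. -/
noncomputable def degIdeal (K : Type) [Field K] (n d : ℕ) : Ideal (MvPolynomial (Fin n) K) :=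
  Ideal.span (mon K n '' {a | ∑ i, a i = d})

lemma mon_mem_degIdeal_iff {d : ℕ} {b : Fin n → ℕ} :
    mon K n b ∈ degIdeal K n d ↔ d ≤ ∑ i, b i := by
  rw [degIdeal, mon_mem_span_iff]
  constructor
  · rintro ⟨a, ha, hle⟩
    calc d = ∑ i, a i := ha.symm
      _ ≤ ∑ i, b i := Finset.sum_le_sum fun i _ => hle i
  · intro h
    obtain ⟨a, hle, hsum⟩ := truncate h
    exact ⟨a, hsum, hle⟩

lemma X_eq_mon (i : Fin n) : (MvPolynomial.X i : MvPolynomial (Fin n) K) = mon K n (Pi.single i 1) := by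
  unfold mon
  rw [MvPolynomial.X]
  congr 1
  ext k
  simp [symm_apply, Finsupp.single_apply, Pi.single_apply, eq_comm]

lemma sum_pi_single_one (i : Fin n) : ∑ k, Pi.single i 1 k = 1 := by
  simp [Pi.single_apply]

lemma degIdeal_eq_pow (d : ℕ) :
    degIdeal K n d
      = (Ideal.span (Set.range (MvPolynomial.X : Fin n → MvPolynomial (Fin n) K))) ^ d := by
  induction d with
  | zero =>
    rw [pow_zero, degIdeal]
    have hset : {a : Fin n → ℕ | ∑ i, a i = 0} = {0} := by
      ext a
      simp only [Set.mem_setOf_eq, Set.mem_singleton_iff]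
      constructor
      · intro h; funext i; exact Finset.sum_eq_zero_iff.mp h i (Finset.mem_univ i)
      · rintro rfl; simp
    rw [hset, Set.image_singleton]
    have h1 : mon K n 0 = 1 := by
      unfold mon
      rw [show Finsupp.equivFunOnFinite.symm (0 : Fin n → ℕ) = 0 by ext k; rfl]
      simp
    rw [h1, Ideal.span_singleton_one, Ideal.one_eq_top]
  | succ d ih =>
    rw [pow_succ, ← ih, degIdeal, degIdeal, Ideal.span, Ideal.span, Ideal.span,
      Submodule.span_mul_span]
    congr 1
    ext z
    constructor
    · rintro ⟨b, hb, rfl⟩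
      simp only [Set.mem_setOf_eq] at hb
      have hb0 : ∃ i, b i ≠ 0 := by
        by_contra hc
        push_neg at hc
        rw [Finset.sum_eq_zero (fun i _ => hc i)] at hb
        omega
      obtain ⟨i, hi⟩ := hb0
      rw [Set.mem_mul]
      refine ⟨mon K n (Function.update b i (b i - 1)), ⟨Function.update b i (b i - 1), ?_, rfl⟩,
        MvPolynomial.X i, Set.mem_range_self i, ?_⟩
      · simp only [Set.mem_setOf_eq]
        rw [Finset.sum_update_of_mem (Finset.mem_univ i), ← Finset.erase_eq]
        rw [← Finset.add_sum_erase _ b (Finset.mem_univ i)] at hb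
        omega
      · rw [X_eq_mon, mon_mul]
        congr 1
        funext k
        rcases eq_or_ne k i with rfl | hk
        · simp only [Pi.add_apply, Function.update_self, Pi.single_eq_same]
          omega
        · simp [Function.update_of_ne hk, Pi.single_eq_of_ne hk]
    · intro hz
      rw [Set.mem_mul] at hz
      obtain ⟨x, hx, y, hy, rfl⟩ := hz
      obtain ⟨a, ha, rfl⟩ := hx
      obtain ⟨i, rfl⟩ := hy
      rw [X_eq_mon, mon_mul]
      refine ⟨a + Pi.single i 1, ?_, rfl⟩
      simp only [Set.mem_setOf_eq, Pi.add_apply, Finset.sum_add_distrib, sum_pi_single_one]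
      simp only [Set.mem_setOf_eq] at ha
      omega

lemma rename_mon (σ : Equiv.Perm (Fin n)) (a : Fin n → ℕ) :
    MvPolynomial.rename (σ : Fin n → Fin n) (mon K n a) = mon K n (a ∘ ⇑σ.symm) := by
  unfold mon
  rw [MvPolynomial.rename_monomial]
  have hmap : Finsupp.mapDomain (σ : Fin n → Fin n) (Finsupp.equivFunOnFinite.symm a)
      = Finsupp.equivFunOnFinite.symm (a ∘ ⇑σ.symm) := by
    ext k
    rw [show ((σ : Fin n → Fin n)) = ⇑(σ : Fin n ≃ Fin n) from rfl,
      Finsupp.mapDomain_equiv_apply]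
    rfl
  rw [hmap]

lemma mem_of_perm {I : Ideal (MvPolynomial (Fin n) K)} (hsym : IsSymmetricIdeal K n I)
    {a : Fin n → ℕ} (ha : mon K n a ∈ I) (σ : Equiv.Perm (Fin n)) :
    mon K n (a ∘ ⇑σ) ∈ I := by
  have h1 : MvPolynomial.rename ((σ.symm : Equiv.Perm (Fin n)) : Fin n → Fin n) (mon K n a)
      ∈ Ideal.map (MvPolynomial.rename ((σ.symm : Equiv.Perm (Fin n)) : Fin n → Fin n)) I :=
    Ideal.mem_map_of_mem _ ha
  rw [hsym σ.symm, rename_mon] at h1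
  simpa using h1

lemma sum_borel {a : Fin n → ℕ} {i j : Fin n} (hij : i ≠ j) (hj : a j ≠ 0) :
    ∑ k, borelMoveVec n a i j k = ∑ k, a k := by
  have key : ∀ f : Fin n → ℕ,
      ∑ k, f k = f i + f j + ∑ k ∈ (Finset.univ.erase i).erase j, f k := by
    intro f
    rw [← Finset.add_sum_erase _ f (Finset.mem_univ i),
      ← Finset.add_sum_erase _ f (Finset.mem_erase.mpr ⟨(Ne.symm hij), Finset.mem_univ j⟩)]
    ring
  rw [key (borelMoveVec n a i j), key a]
  have hrest : ∑ k ∈ (Finset.univ.erase i).erase j, borelMoveVec n a i j k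
      = ∑ k ∈ (Finset.univ.erase i).erase j, a k := by
    apply Finset.sum_congr rfl
    intro k hk
    rw [Finset.mem_erase, Finset.mem_erase] at hk
    unfold borelMoveVec
    rw [if_neg hk.2.1, if_neg hk.1]
  rw [hrest]
  have h1 : borelMoveVec n a i j i = a i + 1 := by unfold borelMoveVec; rw [if_pos rfl]
  have h2 : borelMoveVec n a i j j = a j - 1 := by
    unfold borelMoveVec; rw [if_neg (Ne.symm hij), if_pos rfl]
  rw [h1, h2]
  omega

end Aux

section Engine

variable {K : Type} [Field K]

lemma engine {n : ℕ} {I : Ideal (MvPolynomial (Fin n) K)} (hsym : IsSymmetricIdeal K n I)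
    (hss : ∀ a : Fin n → ℕ, mon K n a ∈ I → ∀ i j : Fin n, i < j → a j ≠ 0 →
      mon K n (borelMoveVec n a i j) ∈ I)
    {a b : Fin n → ℕ} (ha : mon K n a ∈ I) (hab : ∑ i, a i = ∑ i, b i) :
    mon K n b ∈ I := by
  rcases n with _ | m
  · have : b = a := Subsingleton.elim b a
    rw [this]; exact ha
  -- Phase A: concentrate everything at index 0
  have phaseA : ∀ s : ℕ, ∀ c : Fin (m + 1) → ℕ,
      ∑ i ∈ Finset.univ.erase 0, c i = s → mon K (m + 1) c ∈ I →
      mon K (m + 1) (fun k => if k = 0 then ∑ i, c i else 0) ∈ I := by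
    intro s
    induction s with
    | zero =>
      intro c hs hc
      have hceq : (fun k => if k = 0 then ∑ i, c i else 0) = c := by
        funext k
        by_cases hk : k = 0
        · subst hk
          rw [if_pos rfl, ← Finset.add_sum_erase _ c (Finset.mem_univ 0), hs]
          omega
        · rw [if_neg hk]
          exact (Finset.sum_eq_zero_iff.mp hs k
            (Finset.mem_erase.mpr ⟨hk, Finset.mem_univ k⟩)).symm
      rw [hceq]; exact hc
    | succ s ih =>
      intro c hs hc
      obtain ⟨j, hj_mem, hj⟩ := Finset.exists_ne_zero_of_sum_ne_zero
        (s := Finset.univ.erase 0) (f := c) (by rw [hs]; omega)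
      have hj0 : j ≠ 0 := (Finset.mem_erase.mp hj_mem).1
      have hlt : (0 : Fin (m + 1)) < j := Fin.pos_of_ne_zero hj0
      have hc' := hss c hc 0 j hlt hj
      have h2 : ∑ i, borelMoveVec (m + 1) c 0 j i = ∑ i, c i :=
        sum_borel (Ne.symm hj0) hj
      have h1 : ∑ i ∈ Finset.univ.erase 0, borelMoveVec (m + 1) c 0 j i = s := by
        rw [← Finset.add_sum_erase _ _ (Finset.mem_erase.mpr ⟨hj0, Finset.mem_univ j⟩)]
        rw [← Finset.add_sum_erase _ c (Finset.mem_erase.mpr ⟨hj0, Finset.mem_univ j⟩)] at hs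
        have hbm : borelMoveVec (m + 1) c 0 j j = c j - 1 := by
          unfold borelMoveVec; rw [if_neg hj0, if_pos rfl]
        have hrest : ∑ k ∈ (Finset.univ.erase 0).erase j, borelMoveVec (m + 1) c 0 j k
            = ∑ k ∈ (Finset.univ.erase 0).erase j, c k := by
          apply Finset.sum_congr rfl
          intro k hk
          rw [Finset.mem_erase, Finset.mem_erase] at hk
          unfold borelMoveVec
          rw [if_neg hk.2.1, if_neg hk.1]
        rw [hbm, hrest]
        omega
      have := ih _ h1 hc'
      rw [h2] at this
      exact this
  -- Phase B: distribute from the last index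
  have phaseB : ∀ t : ℕ, ∀ c : Fin (m + 1) → ℕ,
      ∑ i ∈ Finset.univ.erase (Fin.last m), c i = t →
      mon K (m + 1) (fun k => if k = Fin.last m then ∑ i, c i else 0) ∈ I →
      mon K (m + 1) c ∈ I := by
    intro t
    induction t with
    | zero =>
      intro c hs hc
      have hceq : (fun k => if k = Fin.last m then ∑ i, c i else 0) = c := by
        funext k
        by_cases hk : k = Fin.last m
        · subst hk
          rw [if_pos rfl, ← Finset.add_sum_erase _ c (Finset.mem_univ (Fin.last m)), hs]
          omega
        · rw [if_neg hk]
          exact (Finset.sum_eq_zero_iff.mp hs k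
            (Finset.mem_erase.mpr ⟨hk, Finset.mem_univ k⟩)).symm
      rw [← hceq]; exact hc
    | succ t ih =>
      intro c hs hc
      obtain ⟨i, hi_mem, hi⟩ := Finset.exists_ne_zero_of_sum_ne_zero
        (s := Finset.univ.erase (Fin.last m)) (f := c) (by rw [hs]; omega)
      have hil : i ≠ Fin.last m := (Finset.mem_erase.mp hi_mem).1
      have hlt : i < Fin.last m := lt_of_le_of_ne (Fin.le_last i) hil
      set c' : Fin (m + 1) → ℕ :=
        fun k => if k = i then c k - 1 else if k = Fin.last m then c k + 1 else c k with hc'def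
      have key : ∀ f : Fin (m + 1) → ℕ,
          ∑ k, f k = f i + f (Fin.last m)
            + ∑ k ∈ (Finset.univ.erase i).erase (Fin.last m), f k := by
        intro f
        rw [← Finset.add_sum_erase _ f (Finset.mem_univ i),
          ← Finset.add_sum_erase _ f (Finset.mem_erase.mpr ⟨Ne.symm hil, Finset.mem_univ _⟩)]
        ring
      have hrest : ∑ k ∈ (Finset.univ.erase i).erase (Fin.last m), c' k
          = ∑ k ∈ (Finset.univ.erase i).erase (Fin.last m), c k := by
        apply Finset.sum_congr rfl
        intro k hk
        rw [Finset.mem_erase, Finset.mem_erase] at hk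
        simp [hc'def, hk.1, hk.2.1]
      have hci' : c' i = c i - 1 := by simp [hc'def]
      have hcl' : c' (Fin.last m) = c (Fin.last m) + 1 := by
        simp [hc'def, Ne.symm hil]
      have hsum : ∑ k, c' k = ∑ k, c k := by
        rw [key c', key c, hrest, hci', hcl']
        omega
      have hst : ∑ k ∈ Finset.univ.erase (Fin.last m), c' k = t := by
        rw [← Finset.add_sum_erase _ c' (Finset.mem_erase.mpr ⟨hil, Finset.mem_univ i⟩ :
          i ∈ Finset.univ.erase (Fin.last m))]
        rw [← Finset.add_sum_erase _ c (Finset.mem_erase.mpr ⟨hil, Finset.mem_univ i⟩ :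
          i ∈ Finset.univ.erase (Fin.last m))] at hs
        have hrest2 : ∑ k ∈ (Finset.univ.erase (Fin.last m)).erase i, c' k
            = ∑ k ∈ (Finset.univ.erase (Fin.last m)).erase i, c k := by
          apply Finset.sum_congr rfl
          intro k hk
          rw [Finset.mem_erase, Finset.mem_erase] at hk
          simp [hc'def, hk.1, hk.2.1]
        rw [hci', hrest2]
        omega
      have hcmem : mon K (m + 1) c' ∈ I := by
        apply ih c' hst
        rw [hsum]
        exact hc
      have hne0 : c' (Fin.last m) ≠ 0 := by rw [hcl']; omega
      have hmove := hss c' hcmem i (Fin.last m) hlt hne0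
      have hbeq : borelMoveVec (m + 1) c' i (Fin.last m) = c := by
        funext k
        unfold borelMoveVec
        by_cases hk : k = i
        · subst hk; rw [if_pos rfl, hci']; omega
        · rw [if_neg hk]
          by_cases hk2 : k = Fin.last m
          · subst hk2; rw [if_pos rfl, hcl']; omega
          · rw [if_neg hk2]; simp [hc'def, hk, hk2]
      rwa [hbeq] at hmove
  -- Combine
  have hA := phaseA _ a rfl ha
  have hswap := mem_of_perm hsym hA (Equiv.swap 0 (Fin.last m))
  have hcomp : ((fun k => if k = 0 then ∑ i, a i else 0) ∘ ⇑(Equiv.swap 0 (Fin.last m)))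
      = fun k => if k = Fin.last m then ∑ i, a i else 0 := by
    funext k
    simp only [Function.comp_apply]
    by_cases hk : k = Fin.last m
    · subst hk
      rw [Equiv.swap_apply_right, if_pos rfl, if_pos rfl]
    · rw [if_neg hk]
      by_cases hk0 : k = 0
      · subst hk0
        have hl0 : Fin.last m ≠ 0 := fun h => hk h.symm
        rw [Equiv.swap_apply_left, if_neg hl0]
      · rw [Equiv.swap_apply_of_ne_of_ne hk0 hk, if_neg hk0]
  rw [hcomp] at hswap
  apply phaseB _ b rfl
  rw [← hab]
  exact hswap

end Engine

/-- The only nonzero monomial ideals of `K[x_1,...,x_n]` that are both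
`𝔖_n`-fixed and strongly stable are the powers `(x_1,...,x_n)^d` of the
homogeneous maximal ideal. -/
theorem symmetric_stronglyStable_iff_power_of_max (K : Type) [Field K] (n : ℕ)
    (I : Ideal (MvPolynomial (Fin n) K)) (hne : I ≠ ⊥) :
    (IsSymmetricIdeal K n I ∧ IsStronglyStable K n I) ↔
      ∃ d : ℕ,
        I = (Ideal.span (Set.range (X : Fin n → MvPolynomial (Fin n) K))) ^ d := by
  constructor
  · rintro ⟨hsym, ⟨S, hspan⟩, hss⟩
    have hSne : S.Nonempty := by
      by_contra h
      rw [Set.not_nonempty_iff_eq_empty] at h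
      rw [h, Set.image_empty, Ideal.span_empty] at hspan
      exact hne hspan
    set T := (fun a : Fin n → ℕ => ∑ i, a i) '' S with hT
    have hTne : T.Nonempty := hSne.image _
    obtain ⟨a0, ha0S, ha0sum'⟩ := Nat.sInf_mem hTne
    have ha0sum : ∑ i, a0 i = sInf T := ha0sum'
    refine ⟨sInf T, ?_⟩
    rw [← degIdeal_eq_pow]
    apply le_antisymm
    · rw [hspan, Ideal.span_le]
      rintro z ⟨a, haS, rfl⟩
      rw [SetLike.mem_coe, mon_mem_degIdeal_iff]
      exact Nat.sInf_le ⟨a, haS, rfl⟩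
    · rw [degIdeal, Ideal.span_le]
      rintro z ⟨b, hb, rfl⟩
      have ha0 : mon K n a0 ∈ I := hspan ▸ Ideal.subset_span ⟨a0, ha0S, rfl⟩
      rw [SetLike.mem_coe]
      exact engine hsym hss ha0 (by rw [ha0sum, hb])
  · rintro ⟨d, rfl⟩
    rw [← degIdeal_eq_pow]
    refine ⟨?_, ⟨{a | ∑ i, a i = d}, rfl⟩, ?_⟩
    · intro σ
      rw [degIdeal, Ideal.map_span, ← Set.image_comp]
      congr 1
      ext z
      constructor
      · rintro ⟨a, ha, rfl⟩
        refine ⟨a ∘ ⇑σ.symm, ?_, ?_⟩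
        · simp only [Set.mem_setOf_eq] at ha ⊢
          rw [show ∑ i, (a ∘ ⇑σ.symm) i = ∑ i, a (σ.symm i) from rfl,
            Equiv.sum_comp σ.symm a]
          exact ha
        · exact (rename_mon σ a).symm
      · rintro ⟨a, ha, rfl⟩
        refine ⟨a ∘ ⇑σ, ?_, ?_⟩
        · simp only [Set.mem_setOf_eq] at ha ⊢
          rw [show ∑ i, (a ∘ ⇑σ) i = ∑ i, a (σ i) from rfl, Equiv.sum_comp σ a]
          exact ha
        · show MvPolynomial.rename (σ : Fin n → Fin n) (mon K n (a ∘ ⇑σ)) = mon K n a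
          rw [rename_mon]
          congr 1
          funext k
          simp
    · intro a ha i j hij hj
      rw [mon_mem_degIdeal_iff] at ha ⊢
      rw [sum_borel (ne_of_lt hij) hj]
      exact ha
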